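/- Let r ≥ 2 and m ≥ 1 be integers, and let H be a spanning r-uniform multi-hypergraph with hyperedges R_1, …, R_m on vertex set V such that every R_i meets the union of the other hyperedges in at least 2 vertices. If |V| = (r−1)·m, then every hyperedge contains exactly 2 vertices of degree 2 and r−2 vertices of degree 1, and no vertex has degree ≥ 3. -/
import Mathlib


/-- In a spanning `r`-uniform multi-hypergraph with hyperedges
`R 1, …, R m` on vertex set `α` in which every hyperedge meets the union of the others
in at least 2 vertices, if the number of vertices equals `(r-1)·m`, then every hyperedge
contains exactly `2` vertices of degree `2` and `r-2` vertices of degree `1`, and no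
vertex has degree `≥ 3`.  Here the degree of `v` is the number of indices `i` with
`v ∈ R i`. -/
theorem clique_hypergraph_equality_case {α : Type*} [Fintype α] [DecidableEq α]
    (r m : ℕ) (hr : 2 ≤ r) (hm : 1 ≤ m) (R : Fin m → Finset α)
    (hcard : ∀ i, (R i).card = r)
    (hspan : ∀ v : α, ∃ i, v ∈ R i)
    (hmeet : ∀ i, 2 ≤ (R i ∩ (Finset.univ.erase i).biUnion R).card)
    (hv : Fintype.card α = (r - 1) * m)
    (deg : α → ℕ) (hdeg : ∀ v, deg v = (Finset.univ.filter fun i => v ∈ R i).card) :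
    (∀ i, ((R i).filter fun v => deg v = 2).card = 2 ∧
          ((R i).filter fun v => deg v = 1).card = r - 2) ∧
    (∀ v, deg v ≤ 2) := by
  classical
  have hdeg1 : ∀ v, 1 ≤ deg v := by
    intro v
    obtain ⟨i, hi⟩ := hspan v
    rw [hdeg]
    exact Finset.card_pos.2 ⟨i, Finset.mem_filter.2 ⟨Finset.mem_univ i, hi⟩⟩
  set S : Finset α := Finset.univ.filter (fun v => 2 ≤ deg v) with hS
  -- double counting
  have hdc : ∀ (T : Finset α), ∑ v ∈ T, deg v
      = ∑ i : Fin m, ((R i).filter (fun v => v ∈ T)).card := by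
    intro T
    calc ∑ v ∈ T, deg v
        = ∑ v ∈ T, ∑ i : Fin m, if v ∈ R i then 1 else 0 := by
          refine Finset.sum_congr rfl fun v _ => ?_
          rw [hdeg, Finset.card_filter]
      _ = ∑ i : Fin m, ∑ v ∈ T, if v ∈ R i then 1 else 0 := Finset.sum_comm
      _ = ∑ i : Fin m, ((R i).filter (fun v => v ∈ T)).card := by
          refine Finset.sum_congr rfl fun i _ => ?_
          rw [← Finset.card_filter]
          congr 1
          ext v
          simp [and_comm]
  have hsum_total : ∑ v : α, deg v = r * m := by
    rw [hdc Finset.univ]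
    have : ∀ i : Fin m, ((R i).filter (fun v => v ∈ (Finset.univ : Finset α))).card = r := by
      intro i
      rw [Finset.filter_true_of_mem (fun v _ => Finset.mem_univ v), hcard]
    rw [Finset.sum_congr rfl (fun i _ => this i), Finset.sum_const, Finset.card_univ,
      Fintype.card_fin, smul_eq_mul, mul_comm]
  -- each edge has ≥ 2 vertices in S
  have hedge : ∀ i : Fin m, 2 ≤ ((R i).filter (fun v => v ∈ S)).card := by
    intro i
    refine le_trans (hmeet i) (Finset.card_le_card ?_)
    intro v hvmem
    rw [Finset.mem_inter, Finset.mem_biUnion] at hvmem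
    obtain ⟨hvi, j, hj, hvj⟩ := hvmem
    rw [Finset.mem_erase] at hj
    refine Finset.mem_filter.2 ⟨hvi, Finset.mem_filter.2 ⟨Finset.mem_univ v, ?_⟩⟩
    rw [hdeg]
    exact Finset.one_lt_card.2 ⟨i, Finset.mem_filter.2 ⟨Finset.mem_univ i, hvi⟩,
      j, Finset.mem_filter.2 ⟨Finset.mem_univ j, hvj⟩, fun h => hj.1 (h.symm)⟩
  -- sum over S
  have hsplit : ∑ v ∈ S, deg v + ∑ v ∈ Finset.univ \ S, deg v = r * m := by
    rw [← hsum_total, add_comm, Finset.sum_sdiff (Finset.subset_univ S)]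
  have hcompl : ∑ v ∈ Finset.univ \ S, deg v = (r - 1) * m - S.card := by
    have h1 : ∀ v ∈ Finset.univ \ S, deg v = 1 := by
      intro v hvmem
      rw [Finset.mem_sdiff, hS, Finset.mem_filter] at hvmem
      have h2 : ¬ 2 ≤ deg v := fun h => hvmem.2 ⟨Finset.mem_univ v, h⟩
      have := hdeg1 v
      omega
    rw [Finset.sum_congr rfl h1, Finset.sum_const, smul_eq_mul, mul_one,
      Finset.card_sdiff_of_subset (Finset.subset_univ S), Finset.card_univ, hv]
  have hkle : S.card ≤ (r - 1) * m := by
    rw [← hv, ← Finset.card_univ]; exact Finset.card_le_card (Finset.subset_univ S)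
  have hrm : r * m = m + (r - 1) * m := by
    cases r with
    | zero => omega
    | succ n => rw [Nat.succ_mul, Nat.succ_sub_one]; omega
  have hsumS : ∑ v ∈ S, deg v = m + S.card := by omega
  have hlow : 2 * m ≤ ∑ v ∈ S, deg v := by
    rw [hdc S]
    calc 2 * m = ∑ _i : Fin m, 2 := by simp [mul_comm]
      _ ≤ _ := Finset.sum_le_sum fun i _ => hedge i
  have hhigh : 2 * S.card ≤ ∑ v ∈ S, deg v := by
    calc 2 * S.card = ∑ _v ∈ S, 2 := by simp [mul_comm]
      _ ≤ _ := Finset.sum_le_sum fun v hvS => (Finset.mem_filter.1 hvS).2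
  have hkm : S.card = m := by omega
  -- every vertex of S has degree exactly 2
  have hdegS : ∀ v ∈ S, deg v = 2 := by
    have heq : ∑ v ∈ S, (2 : ℕ) = ∑ v ∈ S, deg v := by
      rw [Finset.sum_const, smul_eq_mul]; omega
    intro v hvS
    exact ((Finset.sum_eq_sum_iff_of_le
      (fun w hw => (Finset.mem_filter.1 hw).2)).1 heq v hvS).symm
  have hle2 : ∀ v, deg v ≤ 2 := by
    intro v
    by_cases h : 2 ≤ deg v
    · exact le_of_eq (hdegS v (Finset.mem_filter.2 ⟨Finset.mem_univ v, h⟩))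
    · omega
  -- each edge has exactly 2 vertices in S
  have hedge2 : ∀ i : Fin m, ((R i).filter (fun v => v ∈ S)).card = 2 := by
    have heq : ∑ _i : Fin m, (2 : ℕ)
        = ∑ i : Fin m, ((R i).filter (fun v => v ∈ S)).card := by
      rw [← hdc S, Finset.sum_const, Finset.card_univ, Fintype.card_fin, smul_eq_mul]
      omega
    intro i
    exact ((Finset.sum_eq_sum_iff_of_le
      (fun j _ => hedge j)).1 heq i (Finset.mem_univ i)).symm
  refine ⟨fun i => ?_, hle2⟩
  have hfeq : (R i).filter (fun v => deg v = 2) = (R i).filter (fun v => v ∈ S) := by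
    ext v
    simp only [Finset.mem_filter, hS, Finset.mem_univ, true_and]
    constructor
    · rintro ⟨h1, h2⟩; exact ⟨h1, by omega⟩
    · rintro ⟨h1, h2⟩; exact ⟨h1, by have := hle2 v; omega⟩
  have h2 : ((R i).filter fun v => deg v = 2).card = 2 := by rw [hfeq, hedge2 i]
  refine ⟨h2, ?_⟩
  have hneg : (R i).filter (fun v => deg v = 1)
      = (R i).filter (fun v => ¬ deg v = 2) := by
    ext v
    simp only [Finset.mem_filter]
    constructor
    · rintro ⟨h1, hd⟩; exact ⟨h1, by omega⟩
    · rintro ⟨h1, hd⟩; exact ⟨h1, by have := hdeg1 v; have := hle2 v; omega⟩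
  have hpart := Finset.card_filter_add_card_filter_not
    (s := R i) (p := fun v => deg v = 2)
  rw [hcard i] at hpart
  rw [hneg]
  omega
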